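/- Let n ≥ 1, ε > 0, R ≥ 0, and let c_n^ε = ε^n · Γ(n/2+1) / (Γ(n) · n · π^{n/2}). For an integer N ≥ 0 define I_N(R) = ∫_{{(v_1,…,v_N) ∈ (ℝ^n)^N : Σ_{j=1}^{N} ‖v_j‖ ≤ R}} Π_{i=1}^{N} c_n^ε·exp(−ε‖v_i‖) dv_1⋯dv_N (with I_0(R) = 1). Then for every N ≥ 1, I_N(R) ≥ I_{N−1}(R) − exp(−ε·R) · (c_n^ε)^{N−1} · e_{n−1}(ε·R) · V_n(R)^{N−1}, where V_n(R) = π^{n/2}·R^n/Γ(n/2+1) is the Lebesgue volume of the Euclidean ball of radius R in ℝ^n and e_k(α) = Σ_{i=0}^{k} α^i/i!. -/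

import Mathlib

open MeasureTheory Real Finset

/-- The normalising constant of the `n`-dimensional Laplacian density with parameter `ε`. -/
noncomputable def lapConst (n : ℕ) (ε : ℝ) : ℝ :=
  ε ^ n * Real.Gamma ((n : ℝ) / 2 + 1) / (Real.Gamma n * n * Real.pi ^ ((n : ℝ) / 2))

/-- The volume of the Euclidean ball of radius `R` in `ℝ^n`. -/
noncomputable def ballVol (n : ℕ) (R : ℝ) : ℝ :=
  Real.pi ^ ((n : ℝ) / 2) * R ^ n / Real.Gamma ((n : ℝ) / 2 + 1)

/-- `I_N(R)`: the integral of the product of `N` independent `n`-dimensional Laplacian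
densities over the region where the sum of the Euclidean norms is at most `R`.
(For `N = 0` this equals `1` when `R ≥ 0`.) -/
noncomputable def lapIter (n : ℕ) (ε R : ℝ) (N : ℕ) : ℝ :=
  ∫ v in {v : Fin N → EuclideanSpace ℝ (Fin n) | ∑ j, ‖v j‖ ≤ R},
    ∏ i, lapConst n ε * Real.exp (-ε * ‖v i‖)


private lemma intOn_pow_exp {ε : ℝ} (hε : 0 < ε) (m : ℕ) {t : ℝ} (ht : 0 ≤ t) :
    IntegrableOn (fun y : ℝ => y ^ m * Real.exp (-ε * y)) (Set.Ioi t) := by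
  have h := integrableOn_rpow_mul_exp_neg_mul_rpow (p := 1) (s := m)
    (lt_of_lt_of_le neg_one_lt_zero (Nat.cast_nonneg m)) zero_lt_one hε
  have h2 : IntegrableOn (fun y : ℝ => y ^ m * Real.exp (-ε * y)) (Set.Ioi 0) := by
    refine h.congr_fun (fun x hx => ?_) measurableSet_Ioi
    dsimp only
    rw [Real.rpow_natCast, Real.rpow_one]
  exact h2.mono_set (Set.Ioi_subset_Ioi ht)

private lemma tendsto_aux {ε : ℝ} (hε : 0 < ε) (k : ℕ) :
    Filter.Tendsto (fun y : ℝ => -(1/ε) * (y ^ k * Real.exp (-ε * y)))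
      Filter.atTop (nhds 0) := by
  have h := (tendsto_rpow_mul_exp_neg_mul_atTop_nhds_zero k ε hε).const_mul (-(1/ε))
  rw [mul_zero] at h
  refine h.congr (fun y => ?_)
  rw [Real.rpow_natCast]

private lemma hasDerivAt_aux {ε : ℝ} (hε : 0 < ε) (k : ℕ) (y : ℝ) :
    HasDerivAt (fun y : ℝ => -(1/ε) * (y ^ k * Real.exp (-ε * y)))
      (-(1/ε) * (((k : ℝ) * y ^ (k - 1)) * Real.exp (-ε * y) + y ^ k * (Real.exp (-ε * y) * -ε)))
      y := by
  have h1 : HasDerivAt (fun y : ℝ => y ^ k) ((k : ℝ) * y ^ (k - 1)) y := hasDerivAt_pow k y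
  have h2 : HasDerivAt (fun y : ℝ => Real.exp (-ε * y)) (Real.exp (-ε * y) * -ε) y := by
    simpa using (((hasDerivAt_id y).const_mul (-ε)).exp)
  exact (h1.mul h2).const_mul _

private lemma integral_pow_exp {ε : ℝ} (hε : 0 < ε) :
    ∀ (m : ℕ) (t : ℝ), 0 ≤ t →
      ∫ y in Set.Ioi t, y ^ m * Real.exp (-ε * y) =
        ((m.factorial : ℝ) / ε ^ (m + 1)) * Real.exp (-ε * t) *
          ∑ k ∈ Finset.range (m + 1), (ε * t) ^ k / (k.factorial : ℝ) := by
  intro m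
  induction m with
  | zero =>
    intro t ht
    have hderiv : ∀ y ∈ Set.Ici t, HasDerivAt (fun y : ℝ => -(1/ε) * (y ^ 0 * Real.exp (-ε * y)))
        (y ^ 0 * Real.exp (-ε * y)) y := by
      intro y _
      have h := hasDerivAt_aux hε 0 y
      have : -(1/ε) * (((0 : ℕ) : ℝ) * y ^ (0 - 1) * Real.exp (-ε * y)
          + y ^ 0 * (Real.exp (-ε * y) * -ε)) = y ^ 0 * Real.exp (-ε * y) := by
        field_simp
        simp
      rwa [this] at h
    have := integral_Ioi_of_hasDerivAt_of_tendsto' hderiv (intOn_pow_exp hε 0 ht)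
      (tendsto_aux hε 0)
    rw [this]
    simp only [pow_zero, one_mul, Nat.factorial, Finset.sum_range_one, Nat.cast_one]
    field_simp
    simp only [zero_add, Finset.sum_range_one, pow_zero, Nat.factorial_zero, Nat.cast_one, div_one, pow_one, zero_mul, zero_sub, neg_neg, mul_one]
    ring
  | succ m ih =>
    intro t ht
    set E : ℝ → ℝ := fun y => Real.exp (-ε * y) with hE
    have hderiv : ∀ y ∈ Set.Ici t,
        HasDerivAt (fun y : ℝ => -(1/ε) * (y ^ (m + 1) * Real.exp (-ε * y)))
          (y ^ (m + 1) * Real.exp (-ε * y)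
            - (((m : ℝ) + 1)/ε) * (y ^ m * Real.exp (-ε * y))) y := by
      intro y _
      have h := hasDerivAt_aux hε (m + 1) y
      have heq : -(1/ε) * ((((m + 1 : ℕ) : ℝ) * y ^ (m + 1 - 1)) * Real.exp (-ε * y)
          + y ^ (m + 1) * (Real.exp (-ε * y) * -ε))
          = y ^ (m + 1) * Real.exp (-ε * y)
            - (((m : ℝ) + 1)/ε) * (y ^ m * Real.exp (-ε * y)) := by
        simp only [Nat.add_sub_cancel, Nat.cast_add, Nat.cast_one]
        field_simp
        ring
      rwa [heq] at h
    have hint : IntegrableOn (fun y : ℝ => y ^ (m + 1) * Real.exp (-ε * y)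
        - (((m : ℝ) + 1)/ε) * (y ^ m * Real.exp (-ε * y))) (Set.Ioi t) :=
      (intOn_pow_exp hε (m + 1) ht).sub ((intOn_pow_exp hε m ht).const_mul _)
    have hFTC := integral_Ioi_of_hasDerivAt_of_tendsto' hderiv hint (tendsto_aux hε (m + 1))
    rw [integral_sub (intOn_pow_exp hε (m + 1) ht) ((intOn_pow_exp hε m ht).const_mul _),
      integral_const_mul, ih t ht] at hFTC
    have hmain : ∫ y in Set.Ioi t, y ^ (m + 1) * Real.exp (-ε * y)
        = (1/ε) * (t ^ (m + 1) * Real.exp (-ε * t))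
          + (((m : ℝ) + 1)/ε) * (((m.factorial : ℝ) / ε ^ (m + 1)) * Real.exp (-ε * t) *
            ∑ k ∈ Finset.range (m + 1), (ε * t) ^ k / (k.factorial : ℝ)) := by
      rw [eq_sub_iff_add_eq] at hFTC
      linarith [hFTC]
    rw [hmain, Finset.sum_range_succ (fun k => (ε * t) ^ k / (k.factorial : ℝ)) (m + 1)]
    have hfac : ((m + 1).factorial : ℝ) = ((m : ℝ) + 1) * (m.factorial : ℝ) := by
      rw [Nat.factorial_succ]; push_cast; ring
    have hε' : (ε : ℝ) ≠ 0 := ne_of_gt hε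
    have hfacne : (m.factorial : ℝ) ≠ 0 := Nat.cast_ne_zero.mpr (Nat.factorial_ne_zero m)
    have key : ∀ (S X T A F : ℝ), A ≠ 0 → F ≠ 0 →
        (((m : ℝ) + 1) * F) / (A * ε) * X * (S + A * T / (((m : ℝ) + 1) * F))
          = (1/ε) * (T * X) + (((m : ℝ) + 1)/ε) * (F / A * X * S) := by
      intro S X T A F hA hF
      have hm1 : ((m : ℝ) + 1) ≠ 0 := by positivity
      field_simp
      ring
    have hpow : ε ^ (m + 1 + 1) = ε ^ (m + 1) * ε := by rw [pow_succ]
    have hmp : (ε * t) ^ (m + 1) = ε ^ (m + 1) * t ^ (m + 1) := by rw [mul_pow]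
    rw [hfac, hpow, hmp]
    exact (key _ _ _ _ _ (pow_ne_zero _ hε') hfacne).symm


private lemma lapConst_pos {n : ℕ} (hn : 1 ≤ n) {ε : ℝ} (hε : 0 < ε) : 0 < lapConst n ε := by
  have h1 : (0:ℝ) < (n:ℝ) := by exact_mod_cast hn
  have h2 : 0 < Real.Gamma ((n : ℝ) / 2 + 1) := Real.Gamma_pos_of_pos (by positivity)
  have h3 : 0 < Real.Gamma (n : ℝ) := Real.Gamma_pos_of_pos h1
  have h4 : 0 < Real.pi ^ ((n : ℝ) / 2) := Real.rpow_pos_of_pos Real.pi_pos _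
  exact div_pos (by positivity) (by positivity)

private lemma integrable_exp_neg_abs' {c : ℝ} (hc : 0 < c) :
    Integrable (fun t : ℝ => Real.exp (-c * |t|)) := by
  have hIoi : IntegrableOn (fun t : ℝ => Real.exp (-c * |t|)) (Set.Ioi 0) := by
    refine (exp_neg_integrableOn_Ioi 0 hc).congr_fun (fun x hx => ?_) measurableSet_Ioi
    rw [abs_of_pos hx]
  have hIic : IntegrableOn (fun t : ℝ => Real.exp (-c * |t|)) (Set.Iic 0) := by
    rw [← Measure.map_neg_eq_self (volume : Measure ℝ)]
    have m : MeasurableEmbedding fun x : ℝ => -x := (Homeomorph.neg ℝ).measurableEmbedding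
    rw [m.integrableOn_map_iff]
    simp_rw [Function.comp_def, abs_neg, Set.neg_preimage, Set.neg_Iic, neg_zero]
    exact Iff.mpr integrableOn_Ici_iff_integrableOn_Ioi hIoi
  have := hIic.union hIoi
  rwa [Set.Iic_union_Ioi, integrableOn_univ] at this

private lemma integrable_exp_norm (n : ℕ) (hn : 1 ≤ n) {ε : ℝ} (hε : 0 < ε) :
    Integrable (fun v : EuclideanSpace ℝ (Fin n) => Real.exp (-ε * ‖v‖)) := by
  have hmp := (EuclideanSpace.volume_preserving_symm_measurableEquiv_toLp (Fin n)).symm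
  rw [← MeasurePreserving.integrable_comp_emb hmp (MeasurableEquiv.measurableEmbedding _)]
  have hnR : (0:ℝ) < (n:ℝ) := by exact_mod_cast hn
  have hmaj : Integrable (fun x : Fin n → ℝ => ∏ i, Real.exp (-(ε / n) * |x i|)) :=
    Integrable.fintype_prod (fun _ => integrable_exp_neg_abs' (by positivity))
  refine hmaj.mono' ?_ ?_
  · exact (Real.measurable_exp.comp
      (((MeasurableEquiv.toLp 2 (Fin n → ℝ)).measurable.norm).const_mul
        (-ε))).aestronglyMeasurable
  · refine Filter.Eventually.of_forall (fun x => ?_)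
    have hnorm : ∑ i, |x i| ≤ (n:ℝ) * ‖(MeasurableEquiv.toLp 2 (Fin n → ℝ)) x‖ := by
      have hterm : ∀ i : Fin n, |x i| ≤ ‖(MeasurableEquiv.toLp 2 (Fin n → ℝ)) x‖ := by
        intro i
        have := EuclideanSpace.norm_eq ((MeasurableEquiv.toLp 2 (Fin n → ℝ)) x)
        rw [this]
        have hxi : ((MeasurableEquiv.toLp 2 (Fin n → ℝ)) x) i = x i := rfl
        calc |x i| = Real.sqrt (‖x i‖ ^ 2) := by
              rw [Real.sqrt_sq_eq_abs]; rw [Real.norm_eq_abs, abs_abs]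
          _ ≤ _ := by
            apply Real.sqrt_le_sqrt
            exact Finset.single_le_sum (f := fun i => ‖x i‖^2) (fun j _ => by positivity)
              (Finset.mem_univ i)
      calc ∑ i, |x i| ≤ ∑ _i : Fin n, ‖(MeasurableEquiv.toLp 2 (Fin n → ℝ)) x‖ :=
            Finset.sum_le_sum (fun i _ => hterm i)
        _ = (n:ℝ) * ‖(MeasurableEquiv.toLp 2 (Fin n → ℝ)) x‖ := by
            rw [Finset.sum_const, Finset.card_univ, Fintype.card_fin, nsmul_eq_mul]
    simp only [Function.comp_apply, Real.norm_eq_abs]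
    rw [abs_of_pos (Real.exp_pos _), ← Real.exp_sum]
    apply Real.exp_le_exp.mpr
    have : ∑ i, -(ε / n) * |x i| = -(ε/n) * ∑ i, |x i| := by rw [Finset.mul_sum]
    rw [this]
    rw [neg_mul, neg_mul, neg_le_neg_iff]
    calc ε / n * ∑ i, |x i| ≤ ε / n * ((n:ℝ) * ‖(MeasurableEquiv.toLp 2 (Fin n → ℝ)) x‖) := by
          apply mul_le_mul_of_nonneg_left hnorm (by positivity)
      _ = ε * ‖(MeasurableEquiv.toLp 2 (Fin n → ℝ)) x‖ := by field_simp

private lemma tail_integral (n : ℕ) (hn : 1 ≤ n) {ε : ℝ} (hε : 0 < ε) {t : ℝ} (ht : 0 ≤ t) :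
    ∫ v in {v : EuclideanSpace ℝ (Fin n) | t ≤ ‖v‖}, lapConst n ε * Real.exp (-ε * ‖v‖)
      = Real.exp (-ε * t) * ∑ k ∈ Finset.range n, (ε * t) ^ k / (k.factorial : ℝ) := by
  haveI : Nonempty (Fin n) := ⟨⟨0, hn⟩⟩
  set F : ℝ → ℝ := Set.indicator (Set.Ici t) (fun y => lapConst n ε * Real.exp (-ε * y)) with hF
  have hset : MeasurableSet {v : EuclideanSpace ℝ (Fin n) | t ≤ ‖v‖} :=
    (isClosed_le continuous_const continuous_norm).measurableSet
  have h1 : ∫ v in {v : EuclideanSpace ℝ (Fin n) | t ≤ ‖v‖}, lapConst n ε * Real.exp (-ε * ‖v‖)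
      = ∫ v : EuclideanSpace ℝ (Fin n), F ‖v‖ := by
    rw [← integral_indicator hset]
    refine integral_congr_ae (Filter.Eventually.of_forall fun v => ?_)
    by_cases hv : t ≤ ‖v‖ <;> simp [hF, Set.indicator_apply, hv]
  rw [h1, integral_fun_norm_addHaar (volume : Measure (EuclideanSpace ℝ (Fin n))) F,
    finrank_euclideanSpace_fin]
  have hn1 : n - 1 + 1 = n := by omega
  -- inner integral
  have h2 : ∫ y in Set.Ioi (0:ℝ), y ^ (n - 1) • F y
      = lapConst n ε * (((n-1).factorial : ℝ) / ε ^ n * (Real.exp (-ε * t) *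
          ∑ k ∈ Finset.range n, (ε * t) ^ k / (k.factorial : ℝ))) := by
    have hind : ∀ y : ℝ, y ^ (n-1) • F y
        = Set.indicator (Set.Ici t) (fun y => lapConst n ε * (y ^ (n-1) * Real.exp (-ε * y))) y := by
      intro y
      by_cases hy : y ∈ Set.Ici t
      · simp only [hF, Set.indicator_of_mem hy, smul_eq_mul]; ring
      · simp [hF, Set.indicator_of_notMem hy]
    rw [integral_congr_ae (Filter.Eventually.of_forall (fun y => hind y)),
      integral_indicator measurableSet_Ici,
      Measure.restrict_restrict measurableSet_Ici]
    have hsets : (Set.Ici t ∩ Set.Ioi 0 : Set ℝ) =ᵐ[volume] (Set.Ioi t : Set ℝ) := by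
      have h3 : (Set.Ici t ∩ Set.Ioi 0 : Set ℝ) =ᵐ[volume] (Set.Ioi t ∩ Set.Ioi 0 : Set ℝ) :=
        MeasureTheory.ae_eq_set_inter Ioi_ae_eq_Ici.symm (Filter.EventuallyEq.refl _ _)
      have h4 : Set.Ioi t ∩ Set.Ioi 0 = Set.Ioi t :=
        Set.inter_eq_left.mpr (Set.Ioi_subset_Ioi ht)
      rw [h4] at h3
      exact h3
    rw [setIntegral_congr_set hsets, integral_const_mul]
    have := integral_pow_exp hε (n-1) t ht
    rw [hn1] at this
    rw [this]; ring
  rw [h2]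
  -- ball volume
  have hΓ : 0 < Real.Gamma ((n : ℝ) / 2 + 1) := Real.Gamma_pos_of_pos (by positivity)
  have hvol : ((volume (Metric.ball (0 : EuclideanSpace ℝ (Fin n)) 1)).toReal : ℝ)
      = Real.pi ^ ((n : ℝ) / 2) / Real.Gamma ((n : ℝ) / 2 + 1) := by
    rw [EuclideanSpace.volume_ball]
    simp only [Fintype.card_fin]
    rw [ENNReal.ofReal_one, one_pow, one_mul, ENNReal.toReal_ofReal (by positivity)]
    congr 1
    rw [Real.sqrt_eq_rpow, ← Real.rpow_natCast (Real.pi ^ ((1:ℝ)/2)) n,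
      ← Real.rpow_mul Real.pi_pos.le]
    congr 1
    ring
  rw [measureReal_def, hvol]
  -- final algebra
  have h1n : (0:ℝ) < (n:ℝ) := by exact_mod_cast hn
  have hΓn : Real.Gamma (n : ℝ) = ((n-1).factorial : ℝ) := by
    have h := Real.Gamma_nat_eq_factorial (n-1)
    have hcast : ((n - 1 : ℕ) : ℝ) + 1 = (n : ℝ) := by
      rw [Nat.cast_sub hn]; push_cast; ring
    rw [hcast] at h
    exact h
  have hπ : (0:ℝ) < Real.pi ^ ((n : ℝ) / 2) := Real.rpow_pos_of_pos Real.pi_pos _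
  have hfac : ((n-1).factorial : ℝ) ≠ 0 := Nat.cast_ne_zero.mpr (Nat.factorial_ne_zero _)
  rw [nsmul_eq_mul, smul_eq_mul, lapConst, hΓn]
  field_simp



private lemma ballVol_nonneg {n : ℕ} {R : ℝ} (hR : 0 ≤ R) : 0 ≤ ballVol n R := by
  have hΓ : 0 < Real.Gamma ((n : ℝ) / 2 + 1) := Real.Gamma_pos_of_pos (by positivity)
  have hπ : (0:ℝ) < Real.pi ^ ((n : ℝ) / 2) := Real.rpow_pos_of_pos Real.pi_pos _
  unfold ballVol; positivity

private lemma volume_closedBall_eq {n : ℕ} (hn : 1 ≤ n) {R : ℝ} (hR : 0 ≤ R) :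
    volume (Metric.closedBall (0 : EuclideanSpace ℝ (Fin n)) R) = ENNReal.ofReal (ballVol n R) := by
  haveI : Nonempty (Fin n) := ⟨⟨0, hn⟩⟩
  have hΓ : 0 < Real.Gamma ((n : ℝ) / 2 + 1) := Real.Gamma_pos_of_pos (by positivity)
  rw [EuclideanSpace.volume_closedBall]
  simp only [Fintype.card_fin]
  rw [← ENNReal.ofReal_pow hR, ← ENNReal.ofReal_mul (by positivity)]
  congr 1
  have hsq : Real.sqrt Real.pi ^ n = Real.pi ^ ((n : ℝ) / 2) := by
    rw [Real.sqrt_eq_rpow, ← Real.rpow_natCast (Real.pi ^ ((1:ℝ)/2)) n,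
      ← Real.rpow_mul Real.pi_pos.le]
    congr 1; ring
  rw [ballVol, hsq]; ring

/-- the density as an `ℝ≥0∞`-valued function -/
private noncomputable def gfun (n : ℕ) (ε : ℝ) (w : EuclideanSpace ℝ (Fin n)) : ENNReal :=
  ENNReal.ofReal (lapConst n ε * Real.exp (-ε * ‖w‖))

private lemma gfun_meas (n : ℕ) (ε : ℝ) : Measurable (gfun n ε) := by
  apply Measurable.ennreal_ofReal
  exact (Real.measurable_exp.comp (measurable_norm.const_mul (-ε))).const_mul _

private lemma gfun_le {n : ℕ} (hn : 1 ≤ n) {ε : ℝ} (hε : 0 < ε) (w : EuclideanSpace ℝ (Fin n)) :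
    gfun n ε w ≤ ENNReal.ofReal (lapConst n ε) := by
  apply ENNReal.ofReal_le_ofReal
  have h1 : Real.exp (-ε * ‖w‖) ≤ 1 := by
    rw [Real.exp_le_one_iff]
    have : (0:ℝ) ≤ ε * ‖w‖ := by positivity
    linarith
  nlinarith [(lapConst_pos hn hε).le]

private lemma tail_lintegral (n : ℕ) (hn : 1 ≤ n) {ε : ℝ} (hε : 0 < ε) {t : ℝ} (ht : 0 ≤ t) :
    ∫⁻ w in {w : EuclideanSpace ℝ (Fin n) | t ≤ ‖w‖}, gfun n ε w
      = ENNReal.ofReal (Real.exp (-ε * t) * ∑ k ∈ Finset.range n, (ε * t) ^ k / (k.factorial : ℝ)) := by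
  have hint : IntegrableOn (fun w : EuclideanSpace ℝ (Fin n) => lapConst n ε * Real.exp (-ε * ‖w‖))
      {w : EuclideanSpace ℝ (Fin n) | t ≤ ‖w‖} :=
    ((integrable_exp_norm n hn hε).const_mul _).integrableOn
  have hnn : 0 ≤ᵐ[volume.restrict {w : EuclideanSpace ℝ (Fin n) | t ≤ ‖w‖}]
      (fun w : EuclideanSpace ℝ (Fin n) => lapConst n ε * Real.exp (-ε * ‖w‖)) := by
    refine Filter.Eventually.of_forall (fun w => ?_)
    have := (lapConst_pos hn hε).le
    positivity
  simp only [gfun]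
  rw [← MeasureTheory.ofReal_integral_eq_lintegral_ofReal hint hnn, tail_integral n hn hε ht]

private lemma lintegral_gfun_one (n : ℕ) (hn : 1 ≤ n) {ε : ℝ} (hε : 0 < ε) :
    ∫⁻ w, gfun n ε w = 1 := by
  have h0 : {w : EuclideanSpace ℝ (Fin n) | (0:ℝ) ≤ ‖w‖} = Set.univ := by
    ext w; simp [norm_nonneg]
  have := tail_lintegral n hn hε (le_refl (0:ℝ))
  rw [h0, Measure.restrict_univ] at this
  rw [this]
  have hsum : ∑ k ∈ Finset.range n, (ε * 0) ^ k / (k.factorial : ℝ) = 1 := by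
    rw [Finset.sum_eq_single 0]
    · simp
    · intro k _ hk
      rw [mul_zero, zero_pow hk, zero_div]
    · intro h; exact absurd (Finset.mem_range.mpr hn) h
  rw [hsum]; norm_num

private lemma lapSet_meas (n m : ℕ) (R : ℝ) :
    MeasurableSet {v : Fin m → EuclideanSpace ℝ (Fin n) | ∑ j, ‖v j‖ ≤ R} := by
  have hc : Continuous fun v : Fin m → EuclideanSpace ℝ (Fin n) => ∑ j, ‖v j‖ :=
    continuous_finset_sum _ (fun j _ => (continuous_apply j).norm)
  exact (isClosed_le hc continuous_const).measurableSet

private lemma lapIter_eq (n : ℕ) (hn : 1 ≤ n) {ε : ℝ} (hε : 0 < ε) (R : ℝ) (m : ℕ) :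
    lapIter n ε R m
      = (∫⁻ v in {v : Fin m → EuclideanSpace ℝ (Fin n) | ∑ j, ‖v j‖ ≤ R},
          ∏ i, gfun n ε (v i)).toReal := by
  have hc := (lapConst_pos hn hε).le
  rw [lapIter, integral_eq_lintegral_of_nonneg_ae]
  · congr 1
    refine lintegral_congr (fun v => ?_)
    rw [ENNReal.ofReal_prod_of_nonneg]
    · simp only [gfun]
    · intro i _; positivity
  · refine Filter.Eventually.of_forall (fun v => ?_)
    apply Finset.prod_nonneg; intro i _; positivity
  · apply Continuous.aestronglyMeasurable
    apply continuous_finset_prod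
    intro i _
    exact continuous_const.mul
      (Real.continuous_exp.comp (continuous_const.mul ((continuous_apply i).norm)))

private lemma J_le (n : ℕ) (hn : 1 ≤ n) {ε : ℝ} (hε : 0 < ε) {R : ℝ} (hR : 0 ≤ R) (m : ℕ) :
    ∫⁻ v in {v : Fin m → EuclideanSpace ℝ (Fin n) | ∑ j, ‖v j‖ ≤ R}, ∏ i, gfun n ε (v i)
      ≤ ENNReal.ofReal (lapConst n ε ^ m) * ENNReal.ofReal (ballVol n R ^ m) := by
  have hc := (lapConst_pos hn hε).le
  have hvol : volume {v : Fin m → EuclideanSpace ℝ (Fin n) | ∑ j, ‖v j‖ ≤ R}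
      ≤ ENNReal.ofReal (ballVol n R ^ m) := by
    have hsub : {v : Fin m → EuclideanSpace ℝ (Fin n) | ∑ j, ‖v j‖ ≤ R}
        ⊆ Set.pi Set.univ (fun _ : Fin m => Metric.closedBall (0 : EuclideanSpace ℝ (Fin n)) R) := by
      intro v hv
      rw [Set.mem_pi]
      intro j _
      rw [mem_closedBall_zero_iff]
      refine le_trans ?_ hv
      exact Finset.single_le_sum (f := fun j => ‖v j‖) (fun i _ => norm_nonneg _)
        (Finset.mem_univ j)
    calc volume {v : Fin m → EuclideanSpace ℝ (Fin n) | ∑ j, ‖v j‖ ≤ R}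
        ≤ volume (Set.pi Set.univ (fun _ : Fin m => Metric.closedBall (0 : EuclideanSpace ℝ (Fin n)) R)) :=
          measure_mono hsub
      _ = ENNReal.ofReal (ballVol n R ^ m) := by
          rw [volume_pi_pi]
          simp_rw [volume_closedBall_eq hn hR]
          rw [Finset.prod_const, Finset.card_univ, Fintype.card_fin,
            ← ENNReal.ofReal_pow (ballVol_nonneg hR)]
  calc ∫⁻ v in {v : Fin m → EuclideanSpace ℝ (Fin n) | ∑ j, ‖v j‖ ≤ R}, ∏ i, gfun n ε (v i)
      ≤ ∫⁻ _v in {v : Fin m → EuclideanSpace ℝ (Fin n) | ∑ j, ‖v j‖ ≤ R},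
          ENNReal.ofReal (lapConst n ε) ^ m := by
        refine lintegral_mono (fun v => ?_)
        calc ∏ i, gfun n ε (v i) ≤ ∏ _i : Fin m, ENNReal.ofReal (lapConst n ε) :=
              Finset.prod_le_prod' (fun i _ => gfun_le hn hε _)
          _ = ENNReal.ofReal (lapConst n ε) ^ m := by
              rw [Finset.prod_const, Finset.card_univ, Fintype.card_fin]
    _ = ENNReal.ofReal (lapConst n ε) ^ m
          * volume {v : Fin m → EuclideanSpace ℝ (Fin n) | ∑ j, ‖v j‖ ≤ R} :=
        setLIntegral_const _ _
    _ ≤ ENNReal.ofReal (lapConst n ε) ^ m * ENNReal.ofReal (ballVol n R ^ m) :=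
        mul_le_mul_right hvol _
    _ = ENNReal.ofReal (lapConst n ε ^ m) * ENNReal.ofReal (ballVol n R ^ m) := by
        rw [ENNReal.ofReal_pow hc]

private lemma main_aux (n : ℕ) (hn : 1 ≤ n) {ε : ℝ} (hε : 0 < ε) {R : ℝ} (hR : 0 ≤ R) (m : ℕ) :
    lapIter n ε R m -
        Real.exp (-ε * R) * lapConst n ε ^ m *
          (∑ k ∈ Finset.range n, (ε * R) ^ k / (Nat.factorial k)) *
            ballVol n R ^ m ≤
      lapIter n ε R (m + 1) := by
  classical
  have hc : 0 < lapConst n ε := lapConst_pos hn hε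
  set g : EuclideanSpace ℝ (Fin n) → ENNReal := gfun n ε with hgdef
  have hgm : Measurable g := gfun_meas n ε
  set A1 : Set (Fin (m+1) → EuclideanSpace ℝ (Fin n)) := {v | ∑ j, ‖v j‖ ≤ R} with hA1
  set A0 : Set (Fin m → EuclideanSpace ℝ (Fin n)) := {v | ∑ j, ‖v j‖ ≤ R} with hA0
  have hA1meas := lapSet_meas n (m+1) R
  have hA0meas := lapSet_meas n m R
  set H : EuclideanSpace ℝ (Fin n) × (Fin m → EuclideanSpace ℝ (Fin n)) → ENNReal :=
    fun p => g p.1 * ∏ j, g (p.2 j) with hH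
  set B : Set (EuclideanSpace ℝ (Fin n) × (Fin m → EuclideanSpace ℝ (Fin n))) :=
    {p | ‖p.1‖ + ∑ j, ‖p.2 j‖ ≤ R} with hB
  set B' : Set (EuclideanSpace ℝ (Fin n) × (Fin m → EuclideanSpace ℝ (Fin n))) :=
    {p | ∑ j, ‖p.2 j‖ ≤ R} with hB'
  set B'' : Set (EuclideanSpace ℝ (Fin n) × (Fin m → EuclideanSpace ℝ (Fin n))) :=
    {p | ∑ j, ‖p.2 j‖ ≤ R ∧ R - ∑ j, ‖p.2 j‖ ≤ ‖p.1‖} with hB''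
  have hHm : Measurable H :=
    (hgm.comp measurable_fst).mul
      (Finset.measurable_prod Finset.univ
        (fun j _ => hgm.comp ((measurable_pi_apply j).comp measurable_snd)))
  have hcsum : Continuous fun p : EuclideanSpace ℝ (Fin n) × (Fin m → EuclideanSpace ℝ (Fin n)) =>
      ∑ j, ‖p.2 j‖ :=
    continuous_finset_sum _ (fun j _ => ((continuous_apply j).comp continuous_snd).norm)
  have hBmeas : MeasurableSet B :=
    (isClosed_le (continuous_fst.norm.add hcsum) continuous_const).measurableSet
  have hB'meas : MeasurableSet B' := (isClosed_le hcsum continuous_const).measurableSet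
  have hB''meas : MeasurableSet B'' := by
    have : B'' = B' ∩ {p : EuclideanSpace ℝ (Fin n) × (Fin m → EuclideanSpace ℝ (Fin n)) |
        R - ∑ j, ‖p.2 j‖ ≤ ‖p.1‖} := rfl
    rw [this]
    exact hB'meas.inter
      (isClosed_le (continuous_const.sub hcsum) continuous_fst.norm).measurableSet
  set Jm := ∫⁻ v in A0, ∏ i, g (v i) with hJm
  set Jm1 := ∫⁻ v in A1, ∏ i, g (v i) with hJm1
  have hφ := volume_preserving_piFinSuccAbove
    (fun _ : Fin (m+1) => EuclideanSpace ℝ (Fin n)) 0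
  -- Step 1 : Jm1 as an integral over the product space
  have step1 : Jm1 = ∫⁻ p in B, H p := by
    rw [hJm1, ← lintegral_indicator hA1meas, ← lintegral_indicator hBmeas,
      ← hφ.lintegral_comp (hHm.indicator hBmeas)]
    refine lintegral_congr (fun v => ?_)
    have hφv : (MeasurableEquiv.piFinSuccAbove (fun _ : Fin (m+1) => EuclideanSpace ℝ (Fin n)) 0) v
        = (v 0, fun j => v j.succ) := rfl
    rw [hφv]
    have hmem : v ∈ A1 ↔ (v 0, fun j => v j.succ) ∈ B := by
      simp only [hA1, hB, Set.mem_setOf_eq]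
      rw [Fin.sum_univ_succ (f := fun i => ‖v i‖)]
    by_cases hv : v ∈ A1
    · rw [Set.indicator_of_mem hv, Set.indicator_of_mem (hmem.mp hv)]
      simp only [hH]
      exact Fin.prod_univ_succ (f := fun i => g (v i))
    · rw [Set.indicator_of_notMem hv, Set.indicator_of_notMem (fun h => hv (hmem.mpr h))]
  -- Step 2 : Jm as an integral over the product space
  have step2 : ∫⁻ p in B', H p = Jm := by
    rw [← lintegral_indicator hB'meas, Measure.volume_eq_prod,
      lintegral_prod_symm _ ((hHm.indicator hB'meas).aemeasurable)]
    have hin : ∀ v : Fin m → EuclideanSpace ℝ (Fin n),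
        (∫⁻ w, (B'.indicator H) (w, v)) = A0.indicator (fun v => ∏ j, g (v j)) v := by
      intro v
      by_cases hv : v ∈ A0
      · rw [Set.indicator_of_mem hv]
        have h1 : ∀ w, (B'.indicator H) (w, v) = g w * ∏ j, g (v j) := fun w =>
          Set.indicator_of_mem (show (w, v) ∈ B' from hv) H
        rw [lintegral_congr h1, lintegral_mul_const _ hgm, lintegral_gfun_one n hn hε, one_mul]
      · have h1 : ∀ w, (B'.indicator H) (w, v) = 0 := fun w =>
          Set.indicator_of_notMem (show (w, v) ∉ B' from fun hmem => hv hmem) H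
        rw [Set.indicator_of_notMem hv, lintegral_congr h1, lintegral_zero]
    rw [lintegral_congr hin, lintegral_indicator hA0meas]
  -- Step 3 : subset relation
  have hsub : B' ⊆ B ∪ B'' := by
    intro p hp
    by_cases h : ‖p.1‖ + ∑ j, ‖p.2 j‖ ≤ R
    · exact Or.inl h
    · refine Or.inr ⟨hp, ?_⟩
      push_neg at h
      have := norm_nonneg p.1
      linarith
  -- Step 5 : bound on the bad set
  set Ctail := ENNReal.ofReal (Real.exp (-ε * R) *
    ∑ k ∈ Finset.range n, (ε * R) ^ k / (k.factorial : ℝ)) with hCt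
  have hSRnn : 0 ≤ ∑ k ∈ Finset.range n, (ε * R) ^ k / (k.factorial : ℝ) := by
    apply Finset.sum_nonneg; intro k _; positivity
  have step5 : ∫⁻ p in B'', H p
      ≤ Ctail * (ENNReal.ofReal (lapConst n ε ^ m) * ENNReal.ofReal (ballVol n R ^ m)) := by
    rw [← lintegral_indicator hB''meas, Measure.volume_eq_prod,
      lintegral_prod_symm _ ((hHm.indicator hB''meas).aemeasurable)]
    have hin : ∀ v : Fin m → EuclideanSpace ℝ (Fin n),
        (∫⁻ w, (B''.indicator H) (w, v))
          ≤ A0.indicator (fun _ => Ctail * ENNReal.ofReal (lapConst n ε ^ m)) v := by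
      intro v
      by_cases hv : v ∈ A0
      · rw [Set.indicator_of_mem hv]
        have hs0 : 0 ≤ ∑ j, ‖v j‖ := Finset.sum_nonneg (fun j _ => norm_nonneg _)
        have hsR : ∑ j, ‖v j‖ ≤ R := hv
        have h1 : ∀ w, (B''.indicator H) (w, v)
            = Set.indicator {w : EuclideanSpace ℝ (Fin n) | R - ∑ j, ‖v j‖ ≤ ‖w‖}
                (fun w => g w * ∏ j, g (v j)) w := by
          intro w
          by_cases hw : R - ∑ j, ‖v j‖ ≤ ‖w‖
          · rw [Set.indicator_of_mem (show (w, v) ∈ B'' from ⟨hsR, hw⟩),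
              Set.indicator_of_mem (show w ∈ _ from hw)]
          · rw [Set.indicator_of_notMem (show (w, v) ∉ B'' from fun hmem => hw hmem.2),
              Set.indicator_of_notMem (show w ∉ {w : EuclideanSpace ℝ (Fin n) |
                R - ∑ j, ‖v j‖ ≤ ‖w‖} from hw)]
        have htailmeas : MeasurableSet {w : EuclideanSpace ℝ (Fin n) | R - ∑ j, ‖v j‖ ≤ ‖w‖} :=
          (isClosed_le continuous_const continuous_norm).measurableSet
        rw [lintegral_congr h1, lintegral_indicator htailmeas, lintegral_mul_const _ hgm,
          tail_lintegral n hn hε (show (0:ℝ) ≤ R - ∑ j, ‖v j‖ by linarith)]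
        -- now a real-number estimate
        have hprod : ∏ j, g (v j)
            = ENNReal.ofReal (∏ j, (lapConst n ε * Real.exp (-ε * ‖v j‖))) := by
          rw [ENNReal.ofReal_prod_of_nonneg (fun i _ => by positivity)]
          simp only [hgdef, gfun]
        have hprodval : ∏ j, (lapConst n ε * Real.exp (-ε * ‖v j‖))
            = lapConst n ε ^ m * Real.exp (-ε * ∑ j, ‖v j‖) := by
          rw [Finset.prod_mul_distrib, Finset.prod_const, Finset.card_univ, Fintype.card_fin,
            ← Real.exp_sum]
          congr 1
          rw [← Finset.mul_sum]
        have hb1 : 0 ≤ Real.exp (-ε * (R - ∑ j, ‖v j‖)) *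
            ∑ k ∈ Finset.range n, (ε * (R - ∑ j, ‖v j‖)) ^ k / (k.factorial : ℝ) :=
          mul_nonneg (Real.exp_pos _).le (Finset.sum_nonneg fun k _ =>
            div_nonneg (pow_nonneg (mul_nonneg hε.le (by linarith)) k) (Nat.cast_nonneg _))
        rw [hprod, hprodval, ← ENNReal.ofReal_mul hb1, hCt,
          ← ENNReal.ofReal_mul (mul_nonneg (Real.exp_pos _).le hSRnn)]
        apply ENNReal.ofReal_le_ofReal
        have hexp : Real.exp (-ε * (R - ∑ j, ‖v j‖)) * Real.exp (-ε * ∑ j, ‖v j‖)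
            = Real.exp (-ε * R) := by
          rw [← Real.exp_add]; congr 1; ring
        have hSle : ∑ k ∈ Finset.range n, (ε * (R - ∑ j, ‖v j‖)) ^ k / (k.factorial : ℝ)
            ≤ ∑ k ∈ Finset.range n, (ε * R) ^ k / (k.factorial : ℝ) := by
          apply Finset.sum_le_sum
          intro k _
          have hbase : 0 ≤ ε * (R - ∑ j, ‖v j‖) := mul_nonneg hε.le (by linarith)
          gcongr
          linarith
        calc Real.exp (-ε * (R - ∑ j, ‖v j‖)) *
              (∑ k ∈ Finset.range n, (ε * (R - ∑ j, ‖v j‖)) ^ k / (k.factorial : ℝ)) *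
              (lapConst n ε ^ m * Real.exp (-ε * ∑ j, ‖v j‖))
            = Real.exp (-ε * R) *
              ((∑ k ∈ Finset.range n, (ε * (R - ∑ j, ‖v j‖)) ^ k / (k.factorial : ℝ)) *
                lapConst n ε ^ m) := by rw [← hexp]; ring
          _ ≤ Real.exp (-ε * R) *
              ((∑ k ∈ Finset.range n, (ε * R) ^ k / (k.factorial : ℝ)) * lapConst n ε ^ m) := by
              apply mul_le_mul_of_nonneg_left ?_ (Real.exp_pos _).le
              exact mul_le_mul_of_nonneg_right hSle (by positivity)
          _ = Real.exp (-ε * R) * (∑ k ∈ Finset.range n, (ε * R) ^ k / (k.factorial : ℝ)) *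
              lapConst n ε ^ m := by ring
      · have h1 : ∀ w, (B''.indicator H) (w, v) = 0 := fun w =>
          Set.indicator_of_notMem (fun hmem => hv hmem.1) H
        rw [lintegral_congr h1, lintegral_zero]
        exact zero_le
    calc ∫⁻ v, (∫⁻ w, (B''.indicator H) (w, v))
        ≤ ∫⁻ v, A0.indicator (fun _ => Ctail * ENNReal.ofReal (lapConst n ε ^ m)) v :=
          lintegral_mono hin
      _ = Ctail * ENNReal.ofReal (lapConst n ε ^ m) * volume A0 := by
          rw [lintegral_indicator hA0meas, setLIntegral_const]
      _ ≤ Ctail * ENNReal.ofReal (lapConst n ε ^ m) * ENNReal.ofReal (ballVol n R ^ m) := by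
          apply mul_le_mul_right
          have hsub2 : A0 ⊆ Set.pi Set.univ
              (fun _ : Fin m => Metric.closedBall (0 : EuclideanSpace ℝ (Fin n)) R) := by
            intro v hv
            rw [Set.mem_pi]
            intro j _
            rw [mem_closedBall_zero_iff]
            refine le_trans ?_ hv
            exact Finset.single_le_sum (f := fun j => ‖v j‖) (fun i _ => norm_nonneg _)
              (Finset.mem_univ j)
          calc volume A0 ≤ volume (Set.pi Set.univ
              (fun _ : Fin m => Metric.closedBall (0 : EuclideanSpace ℝ (Fin n)) R)) :=
                measure_mono hsub2
            _ = ENNReal.ofReal (ballVol n R ^ m) := by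
                rw [volume_pi_pi]
                simp_rw [volume_closedBall_eq hn hR]
                rw [Finset.prod_const, Finset.card_univ, Fintype.card_fin,
                  ← ENNReal.ofReal_pow (ballVol_nonneg hR)]
      _ = Ctail * (ENNReal.ofReal (lapConst n ε ^ m) * ENNReal.ofReal (ballVol n R ^ m)) := by
          ring
  -- Step 4 : chain of inequalities
  have hchain : Jm ≤ Jm1 +
      Ctail * (ENNReal.ofReal (lapConst n ε ^ m) * ENNReal.ofReal (ballVol n R ^ m)) := by
    calc Jm = ∫⁻ p in B', H p := step2.symm
      _ ≤ ∫⁻ p in B ∪ B'', H p :=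
          lintegral_mono' (Measure.restrict_mono hsub le_rfl) le_rfl
      _ ≤ (∫⁻ p in B, H p) + ∫⁻ p in B'', H p := lintegral_union_le _ _ _
      _ ≤ Jm1 + Ctail * (ENNReal.ofReal (lapConst n ε ^ m) * ENNReal.ofReal (ballVol n R ^ m)) := by
          rw [step1]
          exact add_le_add le_rfl step5
  -- Finish : convert to real numbers
  have hBd_ne : Ctail * (ENNReal.ofReal (lapConst n ε ^ m) * ENNReal.ofReal (ballVol n R ^ m))
      ≠ ⊤ :=
    ENNReal.mul_ne_top ENNReal.ofReal_ne_top
      (ENNReal.mul_ne_top ENNReal.ofReal_ne_top ENNReal.ofReal_ne_top)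
  have hJm1_ne : Jm1 ≠ ⊤ :=
    ne_top_of_le_ne_top
      (ENNReal.mul_ne_top ENNReal.ofReal_ne_top ENNReal.ofReal_ne_top)
      (J_le n hn hε hR (m+1))
  have htoReal : Jm.toReal ≤ Jm1.toReal +
      (Ctail * (ENNReal.ofReal (lapConst n ε ^ m) * ENNReal.ofReal (ballVol n R ^ m))).toReal := by
    have := ENNReal.toReal_mono (ENNReal.add_ne_top.mpr ⟨hJm1_ne, hBd_ne⟩) hchain
    rwa [ENNReal.toReal_add hJm1_ne hBd_ne] at this
  have hBdval : (Ctail * (ENNReal.ofReal (lapConst n ε ^ m) * ENNReal.ofReal (ballVol n R ^ m))).toReal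
      = Real.exp (-ε * R) * lapConst n ε ^ m *
          (∑ k ∈ Finset.range n, (ε * R) ^ k / (k.factorial : ℝ)) * ballVol n R ^ m := by
    rw [ENNReal.toReal_mul, ENNReal.toReal_mul, hCt,
      ENNReal.toReal_ofReal (mul_nonneg (Real.exp_pos _).le hSRnn),
      ENNReal.toReal_ofReal (pow_nonneg hc.le m),
      ENNReal.toReal_ofReal (pow_nonneg (ballVol_nonneg hR) m)]
    ring
  rw [lapIter_eq n hn hε R m, lapIter_eq n hn hε R (m+1)]
  have e0 : (∫⁻ v in {v : Fin m → EuclideanSpace ℝ (Fin n) | ∑ j, ‖v j‖ ≤ R},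
      ∏ i, gfun n ε (v i)) = Jm := rfl
  have e1 : (∫⁻ v in {v : Fin (m+1) → EuclideanSpace ℝ (Fin n) | ∑ j, ‖v j‖ ≤ R},
      ∏ i, gfun n ε (v i)) = Jm1 := rfl
  rw [e0, e1]
  linarith [htoReal, hBdval.ge, hBdval.le]

/-- the recursive lower bound
`I_N(R) ≥ I_{N−1}(R) − exp(−εR) · (c_n^ε)^{N−1} · e_{n−1}(εR) · V_n(R)^{N−1}`
for every `N ≥ 1`, where `e_{n−1}(α) = Σ_{k=0}^{n−1} α^k/k!` and `V_n(R)` is the volume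
of the Euclidean ball of radius `R` in `ℝ^n`. -/
theorem lapIter_recursive_bound (n : ℕ) (hn : 1 ≤ n) (ε : ℝ) (hε : 0 < ε)
    (R : ℝ) (hR : 0 ≤ R) (N : ℕ) (hN : 1 ≤ N) :
    lapIter n ε R (N - 1) -
        Real.exp (-ε * R) * lapConst n ε ^ (N - 1) *
          (∑ k ∈ Finset.range n, (ε * R) ^ k / (Nat.factorial k)) *
            ballVol n R ^ (N - 1) ≤
      lapIter n ε R N := by
  obtain ⟨m, rfl⟩ : ∃ m, N = m + 1 := ⟨N - 1, (Nat.succ_pred_eq_of_pos hN).symm⟩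
  simp only [Nat.add_sub_cancel]
  exact main_aux n hn hε hR m
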